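/- The convexity property of Theorem 1 fails for the odd orthogonal group SO(2l+1), l ≥ 2: with V = V(ω_1) the standard representation, both V(0) and V(2ω_1) occur in V ⊗ V, and 2ω_1 = 0 + 2·ω_1 with ω_1 in the root lattice, but V(ω_1) does not occur in V ⊗ V. -/

import Mathlib

/-!
The convexity property of Theorem 1 fails for the odd orthogonal group `SO(2l+1)`, `l ≥ 2`:
with `V = V(ω₁)` the standard representation, both `V(0)` and `V(2ω₁)` occur in `V ⊗ V`, and
`2ω₁ = 0 + 2·ω₁` with `ω₁ = e₁` in the root lattice (it is a short root), but `V(ω₁)` does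
not occur in `V ⊗ V`.
-/

open scoped TensorProduct
open Matrix

section OrthFramework

/-- The Gram matrix (antidiagonal `1`s) of the split non-degenerate quadratic form on `ℂ^m`;
over `ℂ` every non-degenerate quadratic form is equivalent to this one. -/
def antidiagJ (m : ℕ) : Matrix (Fin m) (Fin m) ℂ :=
  Matrix.of fun i j => if (i : ℕ) + (j : ℕ) + 1 = m then 1 else 0

/-- The orthogonal group `O(Ψ) ⊆ GL(m, ℂ)` of the split form `Ψ`. -/
def orthGroup (m : ℕ) : Subgroup (GL (Fin m) ℂ) where
  carrier := {g | ((g : GL (Fin m) ℂ) : Matrix (Fin m) (Fin m) ℂ)ᵀ * antidiagJ m *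
      ((g : GL (Fin m) ℂ) : Matrix (Fin m) (Fin m) ℂ) = antidiagJ m}
  one_mem' := by simp
  mul_mem' := by
    intro a b ha hb
    simp only [Set.mem_setOf_eq, Units.val_mul, Matrix.transpose_mul] at *
    calc (↑b)ᵀ * (↑a)ᵀ * antidiagJ m * ((↑a : Matrix (Fin m) (Fin m) ℂ) * ↑b)
        = (↑b)ᵀ * ((↑a)ᵀ * antidiagJ m * ↑a) * ↑b := by
          simp only [Matrix.mul_assoc]
      _ = antidiagJ m := by rw [ha, hb]
  inv_mem' := by
    intro g hg
    simp only [Set.mem_setOf_eq] at *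
    set A : Matrix (Fin m) (Fin m) ℂ := ((g : GL (Fin m) ℂ) : Matrix (Fin m) (Fin m) ℂ)
    set B : Matrix (Fin m) (Fin m) ℂ := ((g⁻¹ : GL (Fin m) ℂ) : Matrix (Fin m) (Fin m) ℂ)
    have hgg' : A * B = 1 := by
      simp only [A, B, ← Units.val_mul, mul_inv_cancel, Units.val_one]
    calc Bᵀ * antidiagJ m * B
        = Bᵀ * (Aᵀ * antidiagJ m * A) * B := by rw [hg]
      _ = (A * B)ᵀ * antidiagJ m * (A * B) := by
          rw [Matrix.transpose_mul]; simp only [Matrix.mul_assoc]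
      _ = antidiagJ m := by rw [hgg']; simp
  
/-- The special orthogonal group `SO(Ψ) ⊆ GL(m, ℂ)`. -/
def specialOrthGroup (m : ℕ) : Subgroup (GL (Fin m) ℂ) :=
  orthGroup m ⊓ (Matrix.GeneralLinearGroup.det : GL (Fin m) ℂ →* ℂˣ).ker

variable {m : ℕ} {G : Subgroup (GL (Fin m) ℂ)}
variable {V W : Type*} [AddCommGroup V] [Module ℂ V] [AddCommGroup W] [Module ℂ W]

/-- The standard (matrix) representation of a subgroup `G ⊆ GL(m, ℂ)` on `ℂ^m`. -/
noncomputable def stdRep (G : Subgroup (GL (Fin m) ℂ)) : Representation ℂ G (Fin m → ℂ) where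
  toFun g := Matrix.toLin' ((g : GL (Fin m) ℂ) : Matrix (Fin m) (Fin m) ℂ)
  map_one' := by simp; rfl
  map_mul' g h := by
    simp [Units.val_mul, Matrix.toLin'_mul]
    rfl

/-- An element of `G ⊆ GL(m, ℂ)` lying in the diagonal torus. -/
def GIsDiag (g : G) : Prop :=
  ∀ i j, i ≠ j → ((g : GL (Fin m) ℂ) : Matrix (Fin m) (Fin m) ℂ) i j = 0

/-- An element of `G ⊆ GL(m, ℂ)` lying in the upper-triangular unipotent subgroup. -/
def GIsUniUpper (g : G) : Prop :=
  (∀ i, ((g : GL (Fin m) ℂ) : Matrix (Fin m) (Fin m) ℂ) i i = 1) ∧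
    ∀ i j : Fin m, j < i → ((g : GL (Fin m) ℂ) : Matrix (Fin m) (Fin m) ℂ) i j = 0

/-- `ρ` is irreducible. -/
def RepIsIrred (ρ : Representation ℂ G V) : Prop :=
  (∃ v : V, v ≠ 0) ∧ ∀ p : Submodule ℂ V, (∀ g, ∀ x ∈ p, ρ g x ∈ p) → p = ⊥ ∨ p = ⊤

/-- The space of `G`-invariants of `ρ` is nonzero. -/
def RepHasInvariant (ρ : Representation ℂ G V) : Prop := ∃ v : V, v ≠ 0 ∧ ∀ g, ρ g v = v

/-- The tensor product of two representations, with the diagonal `G`-action. -/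
noncomputable def tensorRep2 (ρ : Representation ℂ G V) (σ : Representation ℂ G W) :
    Representation ℂ G (V ⊗[ℂ] W) := ρ.tprod σ

end OrthFramework

section BWeights

variable {l : ℕ} {G : Subgroup (GL (Fin (2 * l + 1)) ℂ)}
variable {V : Type*} [AddCommGroup V] [Module ℂ V]

/-- For `G ⊆ GL(2l+1, ℂ)` of type `B_l` (the split (special) orthogonal group), a weight
`a ∈ ℤ^l` of the diagonal torus `diag(d₁, …, d_l, 1, d_l⁻¹, …, d₁⁻¹)` evaluates on a diagonal
element through the first `l` diagonal entries: `g ↦ ∏ᵢ gᵢᵢ^{aᵢ}`.  `v` is a highest weight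
vector of weight `a`: nonzero, fixed by the unipotent radical of the Borel, torus-eigenvector
with character `a`. -/
def BIsHWVector (ρ : Representation ℂ G V) (a : Fin l → ℤ) (v : V) : Prop :=
  v ≠ 0 ∧ (∀ g, GIsUniUpper g → ρ g v = v) ∧
    ∀ g, GIsDiag g → ρ g v =
      (∏ i : Fin l, ((g : GL (Fin (2 * l + 1)) ℂ) : Matrix (Fin (2 * l + 1)) (Fin (2 * l + 1)) ℂ)
        (Fin.castLE (by omega) i) (Fin.castLE (by omega) i) ^ a i) • v

/-- The irreducible representation `V(a)` of highest weight `a` occurs in `ρ`. -/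
def BOccurs (ρ : Representation ℂ G V) (a : Fin l → ℤ) : Prop := ∃ v, BIsHWVector ρ a v

/-- The roots of type `B_l`, as integer vectors: `±eᵢ ± eⱼ (i ≠ j)` and `±eᵢ`. -/
def BRootsZ (l : ℕ) : Set (Fin l → ℤ) :=
  {v | (∃ i j : Fin l, i ≠ j ∧
          (v = Pi.single i 1 - Pi.single j 1 ∨ v = Pi.single i 1 + Pi.single j 1 ∨
           v = -(Pi.single i 1) - Pi.single j 1)) ∨
       (∃ i : Fin l, v = Pi.single i 1 ∨ v = -(Pi.single i 1))}

end BWeights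


section MyAux

noncomputable def phiB {m : ℕ} (p q : Fin m) : ((Fin m → ℂ) ⊗[ℂ] (Fin m → ℂ)) →ₗ[ℂ] ℂ :=
  TensorProduct.lift (LinearMap.mk₂ ℂ (fun x y => x p * y q)
    (by intros; simp [add_mul]) (by intros; simp; ring)
    (by intros; simp [mul_add]) (by intros; simp; ring))

@[simp] lemma phiB_tmul {m : ℕ} (p q : Fin m) (x y : Fin m → ℂ) :
    phiB p q (x ⊗ₜ[ℂ] y) = x p * y q := rfl

lemma eq_zero_of_phiB {m : ℕ} {v : (Fin m → ℂ) ⊗[ℂ] (Fin m → ℂ)}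
    (h : ∀ p q, phiB p q v = 0) : v = 0 := by
  classical
  set B := (Pi.basisFun ℂ (Fin m)).tensorProduct (Pi.basisFun ℂ (Fin m)) with hB
  refine B.ext_elem fun pq => ?_
  have hcoord : (B.coord pq) = phiB pq.1 pq.2 := by
    refine B.ext fun rs => ?_
    rcases pq with ⟨p, q⟩
    rcases rs with ⟨r, s⟩
    have hb : B (r, s) = Pi.single r 1 ⊗ₜ[ℂ] Pi.single s 1 := by
      rw [hB, Module.Basis.tensorProduct_apply, Pi.basisFun_apply, Pi.basisFun_apply]
    have h1 : B.coord (p, q) (B (r, s)) = if (r, s) = ((p, q) : Fin m × Fin m) then 1 else 0 := by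
      simp [Module.Basis.coord_apply, Module.Basis.repr_self, Finsupp.single_apply]
    have h2 : phiB p q (B (r, s)) = (Pi.single r (1:ℂ) : Fin m → ℂ) p * (Pi.single s (1:ℂ) : Fin m → ℂ) q := by
      rw [hb, phiB_tmul]
    rw [h1, h2]
    rcases eq_or_ne r p with hr | hr
    · rcases eq_or_ne s q with hs | hs
      · subst hr; subst hs; simp
      · subst hr; simp [Prod.ext_iff, hs, Pi.single_apply, Ne.symm hs]
    · simp [Prod.ext_iff, hr, Pi.single_apply, Ne.symm hr]
  have := h pq.1 pq.2
  rw [← hcoord] at this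
  simpa using this

lemma phiB_rep {m : ℕ} {G : Subgroup (GL (Fin m) ℂ)} (g : G) (p q : Fin m)
    (v : (Fin m → ℂ) ⊗[ℂ] (Fin m → ℂ)) :
    phiB p q (tensorRep2 (stdRep G) (stdRep G) g v)
      = ∑ r, ∑ s, (((g : GL (Fin m) ℂ) : Matrix (Fin m) (Fin m) ℂ) p r *
          ((g : GL (Fin m) ℂ) : Matrix (Fin m) (Fin m) ℂ) q s) * phiB r s v := by
  set M : Matrix (Fin m) (Fin m) ℂ := ((g : GL (Fin m) ℂ) : Matrix (Fin m) (Fin m) ℂ) with hM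
  have key : (phiB p q).comp ((tensorRep2 (stdRep G) (stdRep G)) g)
      = ∑ r, ∑ s, ((M p r * M q s) • phiB r s) := by
    apply TensorProduct.ext'
    intro x y
    simp only [LinearMap.comp_apply, tensorRep2, Representation.tprod_apply,
      TensorProduct.map_tmul, LinearMap.sum_apply, LinearMap.smul_apply, smul_eq_mul,
      TensorProduct.sum_tmul]
    have hx : ∀ z : Fin m → ℂ, (stdRep G) g z = fun i => ∑ r, M i r * z r := by
      intro z
      show Matrix.toLin' M z = _
      ext i
      simp [Matrix.toLin'_apply, Matrix.mulVec, dotProduct]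
    rw [hx, hx, phiB_tmul]
    rw [Finset.sum_mul_sum]
    refine Finset.sum_congr rfl fun r _ => Finset.sum_congr rfl fun s _ => ?_
    simp only [phiB_tmul]
    ring
  have := congrArg (fun f => f v) key
  simpa [LinearMap.sum_apply, LinearMap.smul_apply, smul_eq_mul] using this

lemma antidiagJ_apply {m : ℕ} (i j : Fin m) :
    antidiagJ m i j = if j = Fin.rev i then 1 else 0 := by
  have hi := i.is_lt
  have : ((i:ℕ) + (j:ℕ) + 1 = m) ↔ (j = Fin.rev i) := by
    rw [Fin.ext_iff, Fin.val_rev]; omega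
  simp only [antidiagJ, Matrix.of_apply, this]

lemma antidiagJ_sq {m : ℕ} : antidiagJ m * antidiagJ m = 1 := by
  ext p q
  rw [Matrix.mul_apply]
  rw [Finset.sum_eq_single (Fin.rev p)]
  · simp [antidiagJ_apply, Fin.rev_rev, Matrix.one_apply, eq_comm]
  · intro b _ hb; simp [antidiagJ_apply, hb]
  · simp

lemma antidiagJ_mul_std {m : ℕ} (i j : Fin m) (a : ℂ) :
    antidiagJ m * Matrix.single i j a = Matrix.single (Fin.rev i) j a := by
  ext p q
  rw [Matrix.mul_apply]
  rw [Finset.sum_eq_single i]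
  · simp only [antidiagJ_apply, Matrix.single, Matrix.of_apply]
    by_cases h1 : i = Fin.rev p
    · have : Fin.rev i = p := by rw [h1, Fin.rev_rev]
      simp [h1, this]
    · have : Fin.rev i ≠ p := fun h => h1 (by rw [← h, Fin.rev_rev])
      simp [h1, this]
  · intro b _ hb
    simp [Matrix.single, Ne.symm hb]
  · simp

lemma std_mul_antidiagJ {m : ℕ} (i j : Fin m) (a : ℂ) :
    Matrix.single i j a * antidiagJ m = Matrix.single i (Fin.rev j) a := by
  ext p q
  rw [Matrix.mul_apply]
  rw [Finset.sum_eq_single j]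
  · simp only [antidiagJ_apply, Matrix.single, Matrix.of_apply]
    by_cases h1 : q = Fin.rev j
    · simp [h1]
    · have h2 : Fin.rev j ≠ q := fun h => h1 h.symm
      simp [h1, h2]
  · intro b _ hb
    simp [Matrix.single, Ne.symm hb]
  · simp

lemma MJMt {m : ℕ} (g : GL (Fin m) ℂ)
    (hg : ((g : Matrix (Fin m) (Fin m) ℂ))ᵀ * antidiagJ m * (g : Matrix (Fin m) (Fin m) ℂ)
       = antidiagJ m) :
    (g : Matrix (Fin m) (Fin m) ℂ) * antidiagJ m * ((g : Matrix (Fin m) (Fin m) ℂ))ᵀ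
      = antidiagJ m := by
  set A : Matrix (Fin m) (Fin m) ℂ := (g : Matrix (Fin m) (Fin m) ℂ) with hA
  set J : Matrix (Fin m) (Fin m) ℂ := antidiagJ m with hJ
  have hleft : (J * Aᵀ * J) * A = 1 := by
    calc (J * Aᵀ * J) * A = J * (Aᵀ * J * A) := by simp only [Matrix.mul_assoc]
      _ = J * J := by rw [hg]
      _ = 1 := antidiagJ_sq
  have hright : A * (J * Aᵀ * J) = 1 := mul_eq_one_comm.mpr hleft
  calc A * J * Aᵀ = A * J * Aᵀ * (J * J) := by rw [antidiagJ_sq, mul_one]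
    _ = (A * (J * Aᵀ * J)) * J := by simp only [Matrix.mul_assoc]
    _ = J := by rw [hright, one_mul]

noncomputable def wvec (m : ℕ) : (Fin m → ℂ) ⊗[ℂ] (Fin m → ℂ) :=
  ∑ i : Fin m, (Pi.single i 1 : Fin m → ℂ) ⊗ₜ[ℂ] (Pi.single (Fin.rev i) 1 : Fin m → ℂ)

lemma phiB_wvec {m : ℕ} (p q : Fin m) : phiB p q (wvec m) = antidiagJ m p q := by
  rw [wvec, map_sum]
  rw [Finset.sum_eq_single p]
  · simp [Pi.single_apply, antidiagJ_apply]
  · intro b _ hb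
    simp [Pi.single_apply, Ne.symm hb]
  · simp

lemma tau_wvec {m : ℕ} {G : Subgroup (GL (Fin m) ℂ)} (g : G)
    (hg : (g : GL (Fin m) ℂ) ∈ orthGroup m) :
    tensorRep2 (stdRep G) (stdRep G) g (wvec m) = wvec m := by
  set M : Matrix (Fin m) (Fin m) ℂ := ((g : GL (Fin m) ℂ) : Matrix (Fin m) (Fin m) ℂ) with hM
  have horth : Mᵀ * antidiagJ m * M = antidiagJ m := hg
  have hMJMt := MJMt (g : GL (Fin m) ℂ) horth
  rw [← sub_eq_zero]
  apply eq_zero_of_phiB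
  intro p q
  rw [map_sub, phiB_rep, phiB_wvec, sub_eq_zero]
  have : ∑ r, ∑ s, (M p r * M q s) * phiB r s (wvec m) = (M * antidiagJ m * Mᵀ) p q := by
    rw [Matrix.mul_apply]
    have : ∀ s, (M * antidiagJ m) p s * Mᵀ s q = ∑ r, (M p r * M q s) * antidiagJ m r s := by
      intro s
      rw [Matrix.mul_apply, Matrix.transpose_apply, Finset.sum_mul]
      refine Finset.sum_congr rfl fun r _ => by ring
    rw [Finset.sum_congr rfl fun s _ => this s, Finset.sum_comm]
    refine Finset.sum_congr rfl fun r _ => Finset.sum_congr rfl fun s _ => ?_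
    rw [phiB_wvec]
  rw [this, hMJMt]

lemma wvec_ne_zero {m : ℕ} [NeZero m] : wvec m ≠ 0 := by
  intro h
  have := phiB_wvec (m := m) 0 (Fin.rev 0)
  rw [h, map_zero, antidiagJ_apply, if_pos rfl] at this
  exact one_ne_zero this.symm

def wtB (l : ℕ) (i : Fin (2*l+1)) : ℤ :=
  if (i:ℕ) < l then 5 ^ (i:ℕ) else if (i:ℕ) = l then 0 else -(5:ℤ) ^ (2*l - (i:ℕ))

noncomputable def dB (l : ℕ) (i : Fin (2*l+1)) : ℂ := (((2:ℝ) ^ (wtB l i) : ℝ) : ℂ)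

lemma wtB_rev (l : ℕ) (i : Fin (2*l+1)) : wtB l (Fin.rev i) = - wtB l i := by
  have hi := i.is_lt
  have hrev : ((Fin.rev i : Fin (2*l+1)) : ℕ) = 2*l - (i:ℕ) := by
    rw [Fin.val_rev]; omega
  simp only [wtB, hrev]
  rcases lt_trichotomy ((i:ℕ)) l with h | h | h
  · rw [if_neg (by omega), if_neg (by omega), if_pos h]
    rw [show 2*l - (2*l - (i:ℕ)) = (i:ℕ) from by omega]
  · rw [if_neg (by omega), if_pos (by omega), if_neg (by omega), if_pos h]
    ring
  · rw [if_pos (by omega), if_neg (by omega), if_neg (by omega)]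
    ring
lemma dB_ne_zero (l : ℕ) (i : Fin (2*l+1)) : dB l i ≠ 0 := by
  simp only [dB, ne_eq, Complex.ofReal_eq_zero]
  exact zpow_ne_zero _ (by norm_num)

lemma dB_mul_rev (l : ℕ) (i : Fin (2*l+1)) : dB l i * dB l (Fin.rev i) = 1 := by
  simp only [dB, ← Complex.ofReal_mul]
  rw [← zpow_add₀ (by norm_num : (2:ℝ) ≠ 0), wtB_rev, add_neg_cancel, zpow_zero]
  norm_num

lemma dB_mid (l : ℕ) (i : Fin (2*l+1)) (h : (i:ℕ) = l) : dB l i = 1 := by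
  simp only [dB, wtB, h, lt_irrefl, if_neg (lt_irrefl l), if_pos rfl, zpow_zero]
  norm_num

noncomputable def torusGL (l : ℕ) : GL (Fin (2*l+1)) ℂ where
  val := Matrix.diagonal (dB l)
  inv := Matrix.diagonal (fun i => (dB l i)⁻¹)
  val_inv := by
    rw [Matrix.diagonal_mul_diagonal]
    convert Matrix.diagonal_one using 2
    exact funext fun i => mul_inv_cancel₀ (dB_ne_zero _ _)
  inv_val := by
    rw [Matrix.diagonal_mul_diagonal]
    convert Matrix.diagonal_one using 2
    exact funext fun i => inv_mul_cancel₀ (dB_ne_zero _ _)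

lemma torusGL_mem (l : ℕ) : torusGL l ∈ specialOrthGroup (2*l+1) := by
  constructor
  · show (Matrix.diagonal (dB l))ᵀ * antidiagJ (2*l+1) * Matrix.diagonal (dB l) = _
    rw [Matrix.diagonal_transpose]
    ext p q
    rw [Matrix.mul_diagonal, Matrix.diagonal_mul, antidiagJ_apply]
    by_cases h : q = Fin.rev p
    · rw [if_pos h, mul_one, h, dB_mul_rev]
    · rw [if_neg h, mul_zero, zero_mul]
  · show Matrix.GeneralLinearGroup.det (torusGL l) = 1
    apply Units.ext
    rw [Matrix.GeneralLinearGroup.val_det_apply]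
    show (Matrix.diagonal (dB l)).det = 1
    rw [Matrix.det_diagonal]
    refine Finset.prod_involution (fun a _ => Fin.rev a) (fun a _ => dB_mul_rev l a)
      (fun a _ hne => ?_) (fun a ha => Finset.mem_univ _) (fun a ha => Fin.rev_rev a)
    intro hrev
    apply hne
    apply dB_mid
    have := congrArg Fin.val hrev
    rw [Fin.val_rev] at this
    have := a.is_lt
    omega

lemma torusGL_diag (l : ℕ) {G : Subgroup (GL (Fin (2*l+1)) ℂ)} (hmem : torusGL l ∈ G) :
    GIsDiag (⟨torusGL l, hmem⟩ : G) := by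
  intro i j hij
  show Matrix.diagonal (dB l) i j = 0
  exact Matrix.diagonal_apply_ne _ hij

lemma torusGL_apply (l : ℕ) (i : Fin (2*l+1)) :
    ((torusGL l : GL (Fin (2*l+1)) ℂ) : Matrix (Fin (2*l+1)) (Fin (2*l+1)) ℂ) i i = dB l i := by
  show Matrix.diagonal (dB l) i i = dB l i
  exact Matrix.diagonal_apply_eq _ i

def iZero (l : ℕ) : Fin (2*l+1) := ⟨0, by omega⟩
def iOne (l : ℕ) : Fin (2*l+1) := ⟨2*l - (2*l-1), by omega⟩
def iMid (l : ℕ) : Fin (2*l+1) := ⟨l, by omega⟩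
def iR (l : ℕ) : Fin (2*l+1) := ⟨2*l-1, by omega⟩

lemma iOne_val {l : ℕ} (hl : 2 ≤ l) : ((iOne l : Fin (2*l+1)) : ℕ) = 1 := by
  simp only [iOne]; omega

lemma stdBasisMatrix_transpose {m : ℕ} (i j : Fin m) (a : ℂ) :
    (Matrix.single i j a)ᵀ = Matrix.single j i a := by
  ext p q
  simp [Matrix.single, Matrix.transpose_apply, and_comm]

noncomputable def uniN (l : ℕ) : Matrix (Fin (2*l+1)) (Fin (2*l+1)) ℂ :=
  Matrix.single (iOne l) (iMid l) 1 - (2:ℂ)⁻¹ • Matrix.single (iOne l) (iR l) 1 -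
    Matrix.single (iMid l) (iR l) 1

lemma ne_MO {l : ℕ} (hl : 2 ≤ l) : iMid l ≠ iOne l := by
  simp only [Ne, Fin.ext_iff, iOne, iMid]; omega

lemma ne_RO {l : ℕ} (hl : 2 ≤ l) : iR l ≠ iOne l := by
  simp only [Ne, Fin.ext_iff, iOne, iR]; omega

lemma ne_RM {l : ℕ} (hl : 2 ≤ l) : iR l ≠ iMid l := by
  simp only [Ne, Fin.ext_iff, iMid, iR]; omega

lemma uniN_sq {l : ℕ} (hl : 2 ≤ l) :
    uniN l * uniN l = -(Matrix.single (iOne l) (iR l) 1) := by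
  simp only [uniN, sub_mul, mul_sub, Matrix.smul_mul, Matrix.mul_smul,
    Matrix.single_mul_single_same,
    Matrix.single_mul_single_of_ne _ _ _ _ (ne_MO hl),
    Matrix.single_mul_single_of_ne _ _ _ _ (ne_RO hl),
    Matrix.single_mul_single_of_ne _ _ _ _ (ne_RM hl)]
  simp

lemma uniN_cube {l : ℕ} (hl : 2 ≤ l) : uniN l * (uniN l * uniN l) = 0 := by
  rw [uniN_sq hl]
  simp only [uniN, sub_mul, Matrix.mul_neg, Matrix.smul_mul, neg_eq_zero,
    Matrix.single_mul_single_of_ne _ _ _ _ (ne_MO hl),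
    Matrix.single_mul_single_of_ne _ _ _ _ (ne_RO hl),
    Matrix.single_mul_single_of_ne _ _ _ _ (ne_RM hl)]
  simp

lemma uniN_cube' {l : ℕ} (hl : 2 ≤ l) : (uniN l * uniN l) * uniN l = 0 := by
  rw [mul_assoc]
  exact uniN_cube hl

noncomputable def uniGL {l : ℕ} (hl : 2 ≤ l) : GL (Fin (2*l+1)) ℂ where
  val := 1 + uniN l
  inv := 1 - uniN l + uniN l * uniN l
  val_inv := by
    have h3 := uniN_cube hl
    calc (1 + uniN l) * (1 - uniN l + uniN l * uniN l)
        = 1 + uniN l * (uniN l * uniN l) := by noncomm_ring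
      _ = 1 := by rw [h3, add_zero]
  inv_val := by
    have h3 := uniN_cube' hl
    calc (1 - uniN l + uniN l * uniN l) * (1 + uniN l)
        = 1 + (uniN l * uniN l) * uniN l := by noncomm_ring
      _ = 1 := by rw [h3, add_zero]

lemma rev_iOne {l : ℕ} (hl : 2 ≤ l) : Fin.rev (iOne l) = iR l := by
  rw [Fin.ext_iff, Fin.val_rev, iOne_val hl]; simp only [iR]; omega

lemma rev_iMid {l : ℕ} : Fin.rev (iMid l) = iMid l := by
  rw [Fin.ext_iff, Fin.val_rev]; simp only [iMid]; omega

lemma uniGL_entries_above {l : ℕ} (hl : 2 ≤ l) : ∀ i j : Fin (2*l+1), j < i →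
    ((uniGL hl : GL (Fin (2*l+1)) ℂ) : Matrix (Fin (2*l+1)) (Fin (2*l+1)) ℂ) i j = 0 := by
  intro i j hij
  show (1 + uniN l) i j = 0
  have h1 : i ≠ j := ne_of_gt hij
  have hji : (j:ℕ) < (i:ℕ) := hij
  have c1 : ¬(iOne l = i ∧ iMid l = j) := by
    rintro ⟨h2, h3⟩; rw [Fin.ext_iff] at h2 h3; simp only [iOne, iMid] at h2 h3; omega
  have c2 : ¬(iOne l = i ∧ iR l = j) := by
    rintro ⟨h2, h3⟩; rw [Fin.ext_iff] at h2 h3; simp only [iOne, iR] at h2 h3; omega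
  have c3 : ¬(iMid l = i ∧ iR l = j) := by
    rintro ⟨h2, h3⟩; rw [Fin.ext_iff] at h2 h3; simp only [iMid, iR] at h2 h3; omega
  simp only [Matrix.add_apply, Matrix.one_apply, if_neg h1, uniN, Matrix.sub_apply,
    Matrix.smul_apply, Matrix.single, Matrix.of_apply, smul_eq_mul, zero_add,
    if_neg c1, if_neg c2, if_neg c3]
  ring

lemma uniGL_diag_one {l : ℕ} (hl : 2 ≤ l) : ∀ i : Fin (2*l+1),
    ((uniGL hl : GL (Fin (2*l+1)) ℂ) : Matrix (Fin (2*l+1)) (Fin (2*l+1)) ℂ) i i = 1 := by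
  intro i
  show (1 + uniN l) i i = 1
  have c1 : ¬(iOne l = i ∧ iMid l = i) := by
    rintro ⟨h2, h3⟩; rw [Fin.ext_iff] at h2 h3; simp only [iOne, iMid] at h2 h3; omega
  have c2 : ¬(iOne l = i ∧ iR l = i) := by
    rintro ⟨h2, h3⟩; rw [Fin.ext_iff] at h2 h3; simp only [iOne, iR] at h2 h3; omega
  have c3 : ¬(iMid l = i ∧ iR l = i) := by
    rintro ⟨h2, h3⟩; rw [Fin.ext_iff] at h2 h3; simp only [iMid, iR] at h2 h3; omega
  simp only [Matrix.add_apply, Matrix.one_apply_eq, uniN, Matrix.sub_apply,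
    Matrix.smul_apply, Matrix.single, Matrix.of_apply, smul_eq_mul,
    if_neg c1, if_neg c2, if_neg c3]
  ring

lemma uniGL_mem {l : ℕ} (hl : 2 ≤ l) : uniGL hl ∈ specialOrthGroup (2*l+1) := by
  constructor
  · show ((uniGL hl : GL (Fin (2*l+1)) ℂ) : Matrix (Fin (2*l+1)) (Fin (2*l+1)) ℂ)ᵀ *
        antidiagJ (2*l+1) * _ = antidiagJ (2*l+1)
    show (1 + uniN l)ᵀ * antidiagJ (2*l+1) * (1 + uniN l) = antidiagJ (2*l+1)
    have hNt : (uniN l)ᵀ = Matrix.single (iMid l) (iOne l) 1 -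
        (2:ℂ)⁻¹ • Matrix.single (iR l) (iOne l) 1 - Matrix.single (iR l) (iMid l) 1 := by
      simp only [uniN, Matrix.transpose_sub, Matrix.transpose_smul, stdBasisMatrix_transpose]
    have hJN : antidiagJ (2*l+1) * uniN l = Matrix.single (iR l) (iMid l) 1 -
        (2:ℂ)⁻¹ • Matrix.single (iR l) (iR l) 1 - Matrix.single (iMid l) (iR l) 1 := by
      simp only [uniN, Matrix.mul_sub, Matrix.mul_smul, antidiagJ_mul_std, rev_iOne hl,
        rev_iMid]
    have hNtJ : (uniN l)ᵀ * antidiagJ (2*l+1) = Matrix.single (iMid l) (iR l) 1 -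
        (2:ℂ)⁻¹ • Matrix.single (iR l) (iR l) 1 - Matrix.single (iR l) (iMid l) 1 := by
      rw [hNt]
      simp only [Matrix.sub_mul, Matrix.smul_mul, std_mul_antidiagJ, rev_iOne hl, rev_iMid]
    have hNtJN : ((uniN l)ᵀ * antidiagJ (2*l+1)) * uniN l = Matrix.single (iR l) (iR l) 1 := by
      rw [hNtJ]
      simp only [uniN, sub_mul, mul_sub, Matrix.smul_mul, Matrix.mul_smul,
        Matrix.single_mul_single_same,
        Matrix.single_mul_single_of_ne _ _ _ _ (ne_MO hl),
        Matrix.single_mul_single_of_ne _ _ _ _ (ne_RO hl),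
        Matrix.single_mul_single_of_ne _ _ _ _ (ne_RM hl)]
      simp
    calc (1 + uniN l)ᵀ * antidiagJ (2*l+1) * (1 + uniN l)
        = antidiagJ (2*l+1) + antidiagJ (2*l+1) * uniN l + ((uniN l)ᵀ * antidiagJ (2*l+1) +
            ((uniN l)ᵀ * antidiagJ (2*l+1)) * uniN l) := by
          rw [Matrix.transpose_add, Matrix.transpose_one]; noncomm_ring
      _ = antidiagJ (2*l+1) := by
          rw [hNtJN, hJN, hNtJ]
          module
  · show Matrix.GeneralLinearGroup.det (uniGL hl) = 1
    apply Units.ext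
    rw [Matrix.GeneralLinearGroup.val_det_apply]
    have htri : ((uniGL hl : GL (Fin (2*l+1)) ℂ) :
        Matrix (Fin (2*l+1)) (Fin (2*l+1)) ℂ).BlockTriangular id := by
      intro i j hij
      exact uniGL_entries_above hl i j hij
    rw [Matrix.det_of_upperTriangular htri]
    rw [Finset.prod_congr rfl fun i _ => uniGL_diag_one hl i]
    simp

lemma pow5_pos (n : ℕ) : (0:ℤ) < 5 ^ n := pow_pos (by norm_num) n

lemma pow5_sub_ne (a b : ℕ) : (5:ℤ)^a - 5^b ≠ 1 := by
  intro h
  rcases Nat.eq_zero_or_pos a with ha | ha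
  · subst ha
    rw [pow_zero] at h
    have := pow5_pos b
    omega
  · rcases Nat.eq_zero_or_pos b with hb | hb
    · subst hb
      rw [pow_zero] at h
      have : (5:ℤ) ∣ 5^a := dvd_pow_self 5 (by omega)
      omega
    · have d1 : (5:ℤ) ∣ 5^a := dvd_pow_self 5 (by omega)
      have d2 : (5:ℤ) ∣ 5^b := dvd_pow_self 5 (by omega)
      omega

lemma pow5_eq_one {a : ℕ} (h : (5:ℤ)^a = 1) : a = 0 := by
  by_contra ha
  have : (5:ℤ) ∣ 5^a := dvd_pow_self 5 ha
  omega

lemma wtB_sum_ne {l : ℕ} (hl : 2 ≤ l) (p q : Fin (2*l+1))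
    (h : ¬((p = iZero l ∧ q = iMid l) ∨ (p = iMid l ∧ q = iZero l))) :
    wtB l p + wtB l q ≠ 1 := by
  intro heq
  have hp := p.is_lt
  have hq := q.is_lt
  have hZ : ∀ r : Fin (2*l+1), (r = iZero l) ↔ (r:ℕ) = 0 := fun r => by
    rw [Fin.ext_iff]; simp [iZero]
  have hM : ∀ r : Fin (2*l+1), (r = iMid l) ↔ (r:ℕ) = l := fun r => by
    rw [Fin.ext_iff]; simp [iMid]
  simp only [hZ, hM] at h
  simp only [wtB] at heq
  rcases lt_trichotomy ((p:ℕ)) l with h1 | h1 | h1 <;>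
    rcases lt_trichotomy ((q:ℕ)) l with h2 | h2 | h2
  · rw [if_pos h1, if_pos h2] at heq
    have := pow5_pos ((p:ℕ))
    have := pow5_pos ((q:ℕ))
    omega
  · rw [if_pos h1, if_neg (by omega), if_pos h2] at heq
    have hp0 : ((p:ℕ)) = 0 := pow5_eq_one (by omega)
    exact h (Or.inl ⟨hp0, h2⟩)
  · rw [if_pos h1, if_neg (by omega), if_neg (by omega)] at heq
    exact pow5_sub_ne ((p:ℕ)) (2*l - (q:ℕ)) (by omega)
  · rw [if_neg (by omega), if_pos h1, if_pos h2] at heq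
    have hq0 : ((q:ℕ)) = 0 := pow5_eq_one (by omega)
    exact h (Or.inr ⟨h1, hq0⟩)
  · rw [if_neg (by omega), if_pos h1, if_neg (by omega), if_pos h2] at heq
    omega
  · rw [if_neg (by omega), if_pos h1, if_neg (by omega), if_neg (by omega)] at heq
    have := pow5_pos (2*l - (q:ℕ))
    omega
  · rw [if_neg (by omega), if_neg (by omega), if_pos h2] at heq
    exact pow5_sub_ne ((q:ℕ)) (2*l - (p:ℕ)) (by omega)
  · rw [if_neg (by omega), if_neg (by omega), if_neg (by omega), if_pos h2] at heq
    have := pow5_pos (2*l - (p:ℕ))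
    omega
  · rw [if_neg (by omega), if_neg (by omega), if_neg (by omega), if_neg (by omega)] at heq
    have := pow5_pos (2*l - (p:ℕ))
    have := pow5_pos (2*l - (q:ℕ))
    omega

lemma stdRep_apply {m : ℕ} {G : Subgroup (GL (Fin m) ℂ)} (g : G) (x : Fin m → ℂ) :
    (stdRep G) g x = Matrix.toLin' (((g : GL (Fin m) ℂ)) : Matrix (Fin m) (Fin m) ℂ) x := rfl

lemma tau_tmul {m : ℕ} {G : Subgroup (GL (Fin m) ℂ)} (g : G) (x y : Fin m → ℂ) :
    tensorRep2 (stdRep G) (stdRep G) g (x ⊗ₜ[ℂ] y)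
      = ((stdRep G) g x) ⊗ₜ[ℂ] ((stdRep G) g y) := by
  simp [tensorRep2, Representation.tprod_apply]

lemma stdRep_single_uni {l : ℕ} {G : Subgroup (GL (Fin (2*l+1)) ℂ)} (g : G)
    (hg : GIsUniUpper g) :
    (stdRep G) g (Pi.single (iZero l) (1:ℂ)) = Pi.single (iZero l) 1 := by
  set M : Matrix (Fin (2*l+1)) (Fin (2*l+1)) ℂ :=
    ((g : GL (Fin (2*l+1)) ℂ) : Matrix (Fin (2*l+1)) (Fin (2*l+1)) ℂ)
  funext i
  rw [stdRep_apply, Matrix.toLin'_apply]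
  show ∑ j, M i j * (Pi.single (iZero l) 1 : Fin (2*l+1) → ℂ) j
      = (Pi.single (iZero l) 1 : Fin (2*l+1) → ℂ) i
  rw [Finset.sum_eq_single (iZero l)]
  · by_cases hi : i = iZero l
    · subst hi
      simpa using hg.1 (iZero l)
    · have hlt : iZero l < i := by
        rw [Fin.lt_def]
        simp only [iZero]
        have : (i : ℕ) ≠ 0 := fun hh => hi (by rw [Fin.ext_iff]; simpa [iZero] using hh)
        omega
      simpa [Pi.single_apply, Ne.symm hi] using hg.2 i (iZero l) hlt
  · intro b _ hb
    simp [Pi.single_apply, hb]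
  · simp

lemma stdRep_single_diag {m : ℕ} {G : Subgroup (GL (Fin m) ℂ)} (g : G)
    (hg : GIsDiag g) (j : Fin m) :
    (stdRep G) g (Pi.single j (1:ℂ)) =
      ((g : GL (Fin m) ℂ) : Matrix (Fin m) (Fin m) ℂ) j j • (Pi.single j 1 : Fin m → ℂ) := by
  set M : Matrix (Fin m) (Fin m) ℂ := ((g : GL (Fin m) ℂ) : Matrix (Fin m) (Fin m) ℂ)
  funext i
  rw [stdRep_apply, Matrix.toLin'_apply]
  show ∑ k, M i k * (Pi.single j 1 : Fin m → ℂ) k = (M j j • (Pi.single j 1 : Fin m → ℂ)) i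
  rw [Finset.sum_eq_single j]
  · by_cases hi : i = j
    · subst hi; simp
    · simp only [Pi.smul_apply, Pi.single_apply, if_neg hi, smul_eq_mul, mul_zero, mul_one]
      simpa using hg i j hi
  · intro b _ hb
    simp [Pi.single_apply, hb]
  · simp

lemma prod_weight {l : ℕ} (hl0 : 0 < l) (f : Fin (2*l+1) → ℂ) (k : ℤ) (h : l ≤ 2*l+1) :
    (∏ i : Fin l, f (Fin.castLE h i) ^ (if (i:ℕ) = 0 then k else 0)) = f (iZero l) ^ k := by
  have key : ∀ i : Fin l, f (Fin.castLE h i) ^ (if (i:ℕ) = 0 then k else 0)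
      = if i = (⟨0, hl0⟩ : Fin l) then f (iZero l) ^ k else 1 := by
    intro i
    by_cases hi : (i:ℕ) = 0
    · rw [if_pos hi, if_pos (by rw [Fin.ext_iff]; exact hi)]
      congr 2
      rw [Fin.ext_iff]
      exact hi
    · rw [if_neg hi, if_neg (fun hh => hi (by rw [hh])), zpow_zero]
  rw [Finset.prod_congr rfl fun i _ => key i, Finset.prod_ite_eq' Finset.univ,
    if_pos (Finset.mem_univ _)]

lemma dB_zero {l : ℕ} (hl0 : 0 < l) : dB l (iZero l) = 2 := by
  have : wtB l (iZero l) = 1 := by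
    simp only [wtB, iZero]
    simp [hl0]
  rw [dB, this]
  norm_num

lemma dB_prod_ne_two {l : ℕ} {p q : Fin (2*l+1)} (h : wtB l p + wtB l q ≠ 1) :
    dB l p * dB l q ≠ 2 := by
  intro heq
  simp only [dB, ← Complex.ofReal_mul] at heq
  rw [← zpow_add₀ (by norm_num : (2:ℝ) ≠ 0)] at heq
  have h2 : ((2:ℝ) ^ (wtB l p + wtB l q) : ℝ) = ((2:ℝ) ^ (1:ℤ) : ℝ) := by
    have := Complex.ofReal_injective heq
    rw [this]; norm_num
  exact h (zpow_right_injective₀ (by norm_num) (by norm_num) h2)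

end MyAux

theorem convexity_fails_SO_odd (l : ℕ) (hl : 2 ≤ l) :
    letI G := specialOrthGroup (2 * l + 1)
    letI τ := tensorRep2 (stdRep G) (stdRep G)
    -- `V(0)` and `V(2ω₁) = V(0 + 2·ω₁)` occur in `V ⊗ V` …
    BOccurs τ (fun _ => 0) ∧
    BOccurs τ (fun i => if (i : ℕ) = 0 then 2 else 0) ∧
    -- … and `ω₁ = e₁` lies in the root lattice of `B_l` …
    (Pi.single (⟨0, by omega⟩ : Fin l) (1 : ℤ) : Fin l → ℤ) ∈ AddSubgroup.closure (BRootsZ l) ∧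
    -- … but the intermediate weight `ω₁`: `V(ω₁)` does not occur in `V ⊗ V`
    ¬ BOccurs τ (fun i => if (i : ℕ) = 0 then 1 else 0) := by
  have hl0 : 0 < l := by omega
  haveI : NeZero (2*l+1) := ⟨by omega⟩
  refine ⟨?_, ?_, ?_, ?_⟩
  · -- V(0) occurs
    refine ⟨wvec (2*l+1), wvec_ne_zero, fun g _ => ?_, fun g _ => ?_⟩
    · exact tau_wvec g (Subgroup.mem_inf.mp g.2).1
    · rw [tau_wvec g (Subgroup.mem_inf.mp g.2).1]
      simp
  · -- V(2ω₁) occurs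
    refine ⟨(Pi.single (iZero l) 1 : Fin (2*l+1) → ℂ) ⊗ₜ[ℂ]
      (Pi.single (iZero l) 1 : Fin (2*l+1) → ℂ), ?_, ?_, ?_⟩
    · intro h0
      have h1 := congrArg (phiB (iZero l) (iZero l)) h0
      rw [map_zero, phiB_tmul] at h1
      simp at h1
    · intro g hg
      rw [tau_tmul, stdRep_single_uni g hg]
    · intro g hg
      rw [tau_tmul, stdRep_single_diag g hg, TensorProduct.smul_tmul_smul]
      congr 1
      have hp := prod_weight hl0
        (fun j => ((g : GL (Fin (2*l+1)) ℂ) : Matrix (Fin (2*l+1)) (Fin (2*l+1)) ℂ) j j) 2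
        (show l ≤ 2*l+1 by omega)
      rw [hp, zpow_two]
  · -- ω₁ in root lattice
    exact AddSubgroup.subset_closure (Or.inr ⟨⟨0, by omega⟩, Or.inl rfl⟩)
  · -- V(ω₁) does not occur
    rintro ⟨v, hv0, hup, hdiag⟩
    -- torus step
    set t : ↥(specialOrthGroup (2*l+1)) := ⟨torusGL l, torusGL_mem l⟩ with hts
    have hgd : GIsDiag t := torusGL_diag l (torusGL_mem l)
    have ht := hdiag t hgd
    have hent : ∀ j, ((t : GL (Fin (2*l+1)) ℂ) : Matrix (Fin (2*l+1)) (Fin (2*l+1)) ℂ) j j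
        = dB l j := fun j => torusGL_apply l j
    have hsc : (∏ i : Fin l, ((t : GL (Fin (2*l+1)) ℂ) : Matrix (Fin (2*l+1)) (Fin (2*l+1)) ℂ)
        (Fin.castLE (show l ≤ 2*l+1 by omega) i) (Fin.castLE (show l ≤ 2*l+1 by omega) i)
          ^ (if (i:ℕ) = 0 then (1:ℤ) else 0)) = 2 := by
      have hp := prod_weight hl0
        (fun j => ((t : GL (Fin (2*l+1)) ℂ) : Matrix (Fin (2*l+1)) (Fin (2*l+1)) ℂ) j j) 1
        (show l ≤ 2*l+1 by omega)
      rw [hp, hent, dB_zero hl0, zpow_one]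
    have ht2 : tensorRep2 (stdRep (specialOrthGroup (2*l+1))) (stdRep (specialOrthGroup (2*l+1)))
        t v = (2:ℂ) • v := by
      rw [ht, hsc]
    have hcol : ∀ p q : Fin (2*l+1),
        phiB p q (tensorRep2 (stdRep (specialOrthGroup (2*l+1)))
          (stdRep (specialOrthGroup (2*l+1))) t v) = dB l p * dB l q * phiB p q v := by
      intro p q
      rw [phiB_rep]
      rw [Finset.sum_eq_single p ?h1 ?h2]
      case h1 =>
        intro b _ hb
        apply Finset.sum_eq_zero
        intro s _
        rw [hgd p b (Ne.symm hb)]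
        ring
      case h2 => intro h; exact absurd (Finset.mem_univ p) h
      rw [Finset.sum_eq_single q ?h3 ?h4]
      case h3 =>
        intro s _ hs
        rw [hgd q s (Ne.symm hs)]
        ring
      case h4 => intro h; exact absurd (Finset.mem_univ q) h
      rw [hent, hent]
    have hzero : ∀ p q, wtB l p + wtB l q ≠ 1 → phiB p q v = 0 := by
      intro p q hw
      have e1 := congrArg (phiB p q) ht2
      rw [hcol p q, _root_.map_smul, smul_eq_mul] at e1
      have e2 : (dB l p * dB l q - 2) * phiB p q v = 0 := by
        rw [sub_mul]
        rw [e1]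
        ring
      rcases mul_eq_zero.mp e2 with h | h
      · exact absurd (sub_eq_zero.mp h) (dB_prod_ne_two hw)
      · exact h
    have hsupp : ∀ p q, ¬((p = iZero l ∧ q = iMid l) ∨ (p = iMid l ∧ q = iZero l)) →
        phiB p q v = 0 := fun p q h => hzero p q (wtB_sum_ne hl p q h)
    -- unipotent step
    set u : ↥(specialOrthGroup (2*l+1)) := ⟨uniGL hl, uniGL_mem hl⟩ with hus
    have hu := hup u ⟨uniGL_diag_one hl, uniGL_entries_above hl⟩
    have hUrow0 : ∀ r, r ≠ iZero l →
        ((u : GL (Fin (2*l+1)) ℂ) : Matrix (Fin (2*l+1)) (Fin (2*l+1)) ℂ) (iZero l) r = 0 := by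
      intro r hr
      show (1 + uniN l) (iZero l) r = 0
      have c1 : ¬(iOne l = iZero l ∧ iMid l = r) := by
        rintro ⟨h2, _⟩
        rw [Fin.ext_iff, iOne_val hl] at h2
        simp [iZero] at h2
      have c2 : ¬(iOne l = iZero l ∧ iR l = r) := by
        rintro ⟨h2, _⟩
        rw [Fin.ext_iff, iOne_val hl] at h2
        simp [iZero] at h2
      have c3 : ¬(iMid l = iZero l ∧ iR l = r) := by
        rintro ⟨h2, _⟩
        rw [Fin.ext_iff] at h2
        simp only [iMid, iZero] at h2
        omega
      simp only [Matrix.add_apply, Matrix.one_apply, if_neg (Ne.symm hr), uniN,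
        Matrix.sub_apply, Matrix.smul_apply, Matrix.single, Matrix.of_apply, smul_eq_mul,
        if_neg c1, if_neg c2, if_neg c3]
      ring
    have hUzz : ((u : GL (Fin (2*l+1)) ℂ) : Matrix (Fin (2*l+1)) (Fin (2*l+1)) ℂ)
        (iZero l) (iZero l) = 1 := uniGL_diag_one hl (iZero l)
    have hU1M : ((u : GL (Fin (2*l+1)) ℂ) : Matrix (Fin (2*l+1)) (Fin (2*l+1)) ℂ)
        (iOne l) (iMid l) = 1 := by
      show (1 + uniN l) (iOne l) (iMid l) = 1
      have c0 : iOne l ≠ iMid l := fun h => (ne_MO hl) h.symm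
      have c2 : ¬(iOne l = iOne l ∧ iR l = iMid l) := by
        rintro ⟨_, h2⟩
        exact ne_RM hl h2
      have c3 : ¬(iMid l = iOne l ∧ iR l = iMid l) := by
        rintro ⟨h2, _⟩
        exact ne_MO hl h2
      simp only [Matrix.add_apply, Matrix.one_apply, if_neg c0, uniN,
        Matrix.sub_apply, Matrix.smul_apply, Matrix.single, Matrix.of_apply, smul_eq_mul,
        if_neg c3]
      rw [if_pos (show True ∧ True from ⟨trivial, trivial⟩),
        if_neg (show ¬(True ∧ iR l = iMid l) from fun h => ne_RM hl h.2)]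
      norm_num
    have hzm : iZero l ≠ iMid l := by
      simp only [Ne, Fin.ext_iff, iZero, iMid]
      omega
    have hone_ne_mid : iOne l ≠ iMid l := fun h => (ne_MO hl) h.symm
    -- first equation : c (iZero) (iMid) = 0
    have e1 := congrArg (phiB (iZero l) (iOne l)) hu
    rw [phiB_rep] at e1
    rw [Finset.sum_eq_single (iZero l) ?k1 ?k2] at e1
    case k1 =>
      intro r _ hr
      apply Finset.sum_eq_zero
      intro s _
      rw [hUrow0 r hr]
      ring
    case k2 => intro h; exact absurd (Finset.mem_univ _) h
    rw [Finset.sum_eq_single (iMid l) ?k3 ?k4] at e1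
    case k3 =>
      intro s _ hs
      rw [hsupp (iZero l) s (by rintro (⟨_, h2⟩ | ⟨h2, _⟩); exacts [hs h2, hzm h2])]
      ring
    case k4 => intro h; exact absurd (Finset.mem_univ _) h
    rw [hUzz, hU1M, hsupp (iZero l) (iOne l)
      (by rintro (⟨_, h2⟩ | ⟨h2, _⟩); exacts [hone_ne_mid h2, hzm h2])] at e1
    have hc1 : phiB (iZero l) (iMid l) v = 0 := by
      have := e1
      rw [one_mul, one_mul] at this
      exact this
    -- second equation : c (iMid) (iZero) = 0
    have e2 := congrArg (phiB (iOne l) (iZero l)) hu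
    rw [phiB_rep] at e2
    have inner : ∀ r : Fin (2*l+1),
        (∑ s, (((u : GL (Fin (2*l+1)) ℂ) : Matrix (Fin (2*l+1)) (Fin (2*l+1)) ℂ) (iOne l) r *
          ((u : GL (Fin (2*l+1)) ℂ) : Matrix (Fin (2*l+1)) (Fin (2*l+1)) ℂ) (iZero l) s) *
            phiB r s v)
        = ((u : GL (Fin (2*l+1)) ℂ) : Matrix (Fin (2*l+1)) (Fin (2*l+1)) ℂ) (iOne l) r *
            phiB r (iZero l) v := by
      intro r
      rw [Finset.sum_eq_single (iZero l) ?k5 ?k6]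
      case k5 =>
        intro s _ hs
        rw [hUrow0 s hs]
        ring
      case k6 => intro h; exact absurd (Finset.mem_univ _) h
      rw [hUzz]
      ring
    rw [Finset.sum_congr rfl fun r _ => inner r] at e2
    rw [Finset.sum_eq_single (iMid l) ?k7 ?k8] at e2
    case k7 =>
      intro r _ hr
      rw [hsupp r (iZero l) (by rintro (⟨_, h2⟩ | ⟨h2, _⟩); exacts [hzm.symm (h2.symm), hr h2])]
      ring
    case k8 => intro h; exact absurd (Finset.mem_univ _) h
    rw [hU1M, hsupp (iOne l) (iZero l)
      (by rintro (⟨h2, _⟩ | ⟨h2, _⟩); exacts [(by simp [iZero, iOne, Fin.ext_iff] at h2; omega : False), hone_ne_mid h2])] at e2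
    have hc2 : phiB (iMid l) (iZero l) v = 0 := by
      have := e2
      rw [one_mul] at this
      exact this
    -- conclude
    apply hv0
    apply eq_zero_of_phiB
    intro p q
    by_cases hpq : ((p = iZero l ∧ q = iMid l) ∨ (p = iMid l ∧ q = iZero l))
    · rcases hpq with ⟨hp, hq⟩ | ⟨hp, hq⟩
      · rw [hp, hq]; exact hc1
      · rw [hp, hq]; exact hc2
    · exact hsupp p q hpq
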